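/- Let X be a reflexive Banach space and Θ satisfy the uniform convexity condition D_ξΘ(x̄, x) ≥ φ(‖x̄ − x‖) with φ strictly increasing, continuous, φ(0) = 0. Let F : D(F) ⊂ X → Y satisfy: D(F) is convex, F is Fréchet differentiable, and ‖F(x̄) − F(x) − F′(x)(x̄ − x)‖ ≤ η‖F(x̄) − F(x)‖ for all x̄, x ∈ B_{3ρ}(x₀) ∩ D(F) with 0 ≤ η < 1. If x† is a solution of F(x) = y minimizing D_{ξ₀}Θ(·, x₀) over all solutions in D(Θ) ∩ D(F), and D_{ξ₀}Θ(x†, x₀) ≤ φ(ρ), then x† is unique: any other solution x̂ with D_{ξ₀}Θ(x̂, x₀) = D_{ξ₀}Θ(x†, x₀) satisfying the same minimality equals x†. -/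

import Mathlib

/-- Uniqueness of the minimum-Bregman-distance solution x† under the tangential cone condition. -/
theorem xdag_unique {X Y : Type*} [NormedAddCommGroup X] [NormedSpace ℝ X] [CompleteSpace X]
    [NormedAddCommGroup Y] [NormedSpace ℝ Y]
    (hrefl : Function.Surjective (NormedSpace.inclusionInDoubleDual ℝ X))
    (Θ : X → ℝ) (hconv : StrictConvexOn ℝ Set.univ Θ)
    (φ : ℝ → ℝ) (hφmono : StrictMonoOn φ (Set.Ici 0)) (hφcont : Continuous φ) (hφ0 : φ 0 = 0)
    (x₀ : X) (ξ₀ : StrongDual ℝ X)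
    (hξ₀ : ∀ z, Θ x₀ + ξ₀ (z - x₀) ≤ Θ z)
    (hlow : ∀ xb : X, φ ‖xb - x₀‖ ≤ Θ xb - Θ x₀ - ξ₀ (xb - x₀))
    (DF : Set X) (hDF : Convex ℝ DF)
    (F : X → Y) (F' : X → X →L[ℝ] Y)
    (hFderiv : ∀ x ∈ DF, HasFDerivAt F (F' x) x)
    (ρ : ℝ) (hρ : 0 < ρ) (η : ℝ) (hη0 : 0 ≤ η) (hη1 : η < 1)
    (hcone : ∀ xb ∈ Metric.closedBall x₀ (3 * ρ) ∩ DF, ∀ x ∈ Metric.closedBall x₀ (3 * ρ) ∩ DF,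
      ‖F xb - F x - F' x (xb - x)‖ ≤ η * ‖F xb - F x‖)
    (y : Y) (xdag : X) (hxdag : xdag ∈ DF) (hFxdag : F xdag = y)
    (hxdagmin : ∀ x ∈ DF, F x = y →
      Θ xdag - Θ x₀ - ξ₀ (xdag - x₀) ≤ Θ x - Θ x₀ - ξ₀ (x - x₀))
    (hxdagρ : Θ xdag - Θ x₀ - ξ₀ (xdag - x₀) ≤ φ ρ)
    (xhat : X) (hxhat : xhat ∈ DF) (hFxhat : F xhat = y)
    (hxhateq : Θ xhat - Θ x₀ - ξ₀ (xhat - x₀) = Θ xdag - Θ x₀ - ξ₀ (xdag - x₀))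
    (hxhatmin : ∀ x ∈ DF, F x = y →
      Θ xhat - Θ x₀ - ξ₀ (xhat - x₀) ≤ Θ x - Θ x₀ - ξ₀ (x - x₀)) :
    xhat = xdag := by
  by_contra hne
  -- both solutions lie in the ball of radius ρ
  have hball : ∀ z : X, Θ z - Θ x₀ - ξ₀ (z - x₀) ≤ φ ρ → ‖z - x₀‖ ≤ ρ := by
    intro z hz
    by_contra h
    push_neg at h
    have := hφmono (Set.mem_Ici.2 hρ.le) (Set.mem_Ici.2 (norm_nonneg _)) h
    linarith [hlow z]
  have hd : ‖xdag - x₀‖ ≤ ρ := hball _ hxdagρ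
  have hh : ‖xhat - x₀‖ ≤ ρ := hball _ (hxhateq ▸ hxdagρ)
  set m : X := (1/2 : ℝ) • xhat + (1/2 : ℝ) • xdag with hm
  have hmDF : m ∈ DF := hDF hxhat hxdag (by norm_num) (by norm_num) (by norm_num)
  have hmball : ‖m - x₀‖ ≤ ρ := by
    have : m - x₀ = (1/2 : ℝ) • (xhat - x₀) + (1/2 : ℝ) • (xdag - x₀) := by
      rw [hm]; module
    rw [this]
    calc ‖(1/2 : ℝ) • (xhat - x₀) + (1/2 : ℝ) • (xdag - x₀)‖
        ≤ ‖(1/2 : ℝ) • (xhat - x₀)‖ + ‖(1/2 : ℝ) • (xdag - x₀)‖ := norm_add_le _ _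
      _ = (1/2) * ‖xhat - x₀‖ + (1/2) * ‖xdag - x₀‖ := by
          rw [norm_smul, norm_smul]; norm_num
      _ ≤ ρ := by linarith
  have hmem : ∀ z : X, ‖z - x₀‖ ≤ ρ → z ∈ DF → z ∈ Metric.closedBall x₀ (3 * ρ) ∩ DF := by
    intro z hz hzDF
    exact ⟨Metric.mem_closedBall.2 (by rw [dist_eq_norm]; linarith), hzDF⟩
  -- F'(xhat)(xdag - xhat) = 0
  have h1 := hcone xdag (hmem _ hd hxdag) xhat (hmem _ hh hxhat)
  rw [hFxdag, hFxhat] at h1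
  simp only [sub_self, norm_zero, mul_zero, zero_sub, norm_neg, norm_le_zero_iff] at h1
  -- F m = y
  have h2 := hcone m (hmem _ hmball hmDF) xhat (hmem _ hh hxhat)
  have hms : m - xhat = (1/2 : ℝ) • (xdag - xhat) := by rw [hm]; module
  have hF'm : F' xhat (m - xhat) = 0 := by
    rw [hms, map_smul, h1, smul_zero]
  rw [hF'm, sub_zero, hFxhat] at h2
  have hFm : F m = y := by
    have hnn : (0:ℝ) ≤ ‖F m - y‖ := norm_nonneg _
    have : (1 - η) * ‖F m - y‖ ≤ 0 := by nlinarith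
    have : ‖F m - y‖ ≤ 0 := by
      rcases le_or_gt ‖F m - y‖ 0 with h | h
      · exact h
      · nlinarith
    have := le_antisymm this hnn
    rw [norm_eq_zero, sub_eq_zero] at this
    exact this
  -- strict convexity contradiction
  have hsc := hconv.2 (Set.mem_univ xhat) (Set.mem_univ xdag) hne
    (by norm_num : (0:ℝ) < 1/2) (by norm_num : (0:ℝ) < 1/2) (by norm_num)
  have hmin := hxdagmin m hmDF hFm
  have hξm : ξ₀ (m - x₀) = (1/2) * ξ₀ (xhat - x₀) + (1/2) * ξ₀ (xdag - x₀) := by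
    rw [hm]
    simp only [map_sub, map_add, map_smul, smul_eq_mul]
    ring
  rw [← hm] at hsc
  simp only [smul_eq_mul] at hsc
  linarith
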